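/- Let Λ_t = λI + Σ_{i=1}^t φ_i φ_iᵀ where φ_i ∈ ℝ^d and λ > 0. Then Σ_{i=1}^t φ_iᵀ (Λ_t)^{-1} φ_i ≤ d. -/

import Mathlib

open Matrix Finset

lemma vecMulVec_posSemidef {d : ℕ} (v : Fin d → ℝ) :
    (Matrix.vecMulVec v v).PosSemidef := by
  refine Matrix.PosSemidef.of_dotProduct_mulVec_nonneg ?_ ?_
  · ext i j
    simp [Matrix.vecMulVec_apply, mul_comm]
  · intro x
    have : star x ⬝ᵥ (Matrix.vecMulVec v v *ᵥ x) = (v ⬝ᵥ x) ^ 2 := by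
      simp [Matrix.mulVec, dotProduct, Matrix.vecMulVec_apply, Finset.mul_sum,
        Finset.sum_mul, sq]
      rw [Finset.sum_comm]
      apply Finset.sum_congr rfl; intro i _
      apply Finset.sum_congr rfl; intro j _
      ring
    rw [this]
    positivity

lemma smul_one_posDef {d : ℕ} {lam : ℝ} (hlam : 0 < lam) :
    (lam • (1 : Matrix (Fin d) (Fin d) ℝ)).PosDef := by
  have : lam • (1 : Matrix (Fin d) (Fin d) ℝ) = Matrix.diagonal (fun _ => lam) := by
    ext i j
    by_cases h : i = j <;> simp [Matrix.one_apply, Matrix.diagonal_apply, h]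
  rw [this]
  exact Matrix.PosDef.diagonal fun _ => hlam

/-- Lemma D.1 of Jin et al. 2020: trace-type bound for the regularized Gram matrix. -/
theorem stmt7 (d t : ℕ) (lam : ℝ) (hlam : 0 < lam)
    (φ : Fin t → Fin d → ℝ) :
    ∑ i, φ i ⬝ᵥ
        ((lam • (1 : Matrix (Fin d) (Fin d) ℝ) +
            ∑ j, Matrix.vecMulVec (φ j) (φ j))⁻¹ *ᵥ φ i) ≤
      (d : ℝ) := by
  set G : Matrix (Fin d) (Fin d) ℝ := ∑ j, Matrix.vecMulVec (φ j) (φ j) with hG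
  set Λ : Matrix (Fin d) (Fin d) ℝ := lam • (1 : Matrix (Fin d) (Fin d) ℝ) + G with hΛ
  have hGpsd : G.PosSemidef := by
    rw [hG]
    apply Finset.sum_induction
    · exact fun a b ha hb => ha.add hb
    · exact Matrix.PosSemidef.zero
    · exact fun j _ => vecMulVec_posSemidef (φ j)
  have hΛpd : Λ.PosDef := (smul_one_posDef hlam).add_posSemidef hGpsd
  have hinv : Λ⁻¹.PosDef := hΛpd.inv
  -- LHS equals trace (Λ⁻¹ * G)
  have key : ∑ i, φ i ⬝ᵥ (Λ⁻¹ *ᵥ φ i) = (Λ⁻¹ * G).trace := by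
    rw [hG, Finset.mul_sum, Matrix.trace_sum]
    apply Finset.sum_congr rfl
    intro i _
    simp only [Matrix.trace, Matrix.diag, Matrix.mul_apply, Matrix.vecMulVec_apply,
      dotProduct, Matrix.mulVec]
    apply Finset.sum_congr rfl; intro a _
    rw [Finset.mul_sum]
    apply Finset.sum_congr rfl; intro b _
    ring
  have hunit : IsUnit Λ.det := hΛpd.det_pos.ne'.isUnit
  have hGL : G = Λ - lam • (1 : Matrix (Fin d) (Fin d) ℝ) := by rw [hΛ]; abel
  have htr : (Λ⁻¹ * G).trace = (d : ℝ) - lam * Λ⁻¹.trace := by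
    rw [hGL, mul_sub, Matrix.trace_sub, Matrix.nonsing_inv_mul _ hunit, Matrix.trace_one,
      Matrix.mul_smul, Matrix.mul_one, Matrix.trace_smul, smul_eq_mul]
    simp
  have htrinv : 0 ≤ Λ⁻¹.trace := by
    apply Finset.sum_nonneg
    intro i _
    have := hinv.posSemidef.dotProduct_mulVec_nonneg (Pi.single i 1)
    simpa using this
  calc ∑ i, φ i ⬝ᵥ (Λ⁻¹ *ᵥ φ i) = (d : ℝ) - lam * Λ⁻¹.trace := by rw [key, htr]
    _ ≤ (d : ℝ) := by nlinarith
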